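/- Let α > 2, d > 0, let S be a finite set of points in the Euclidean plane whose pairwise distances are all at least d, let u be any point, and let k ≥ 1 be an integer. Then Σ_{s ∈ S, dist(s,u) ≥ k·d} dist(s,u)^(−α) ≤ 24·(1 + 1/(α − 2))·k^(2−α)·d^(−α). -/

import Mathlib

open scoped BigOperators
open scoped Classical

open MeasureTheory Metric

/-- Bernoulli-type inequality: for `t > 1` and `p > 0`, `1 + p*(t-1)/t ≤ t^p`. -/
lemma aux_bernoulli {t p : ℝ} (ht : 1 < t) (hp : 0 < p) :
    1 + p * (t - 1) / t ≤ t ^ p := by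
  have ht0 : 0 < t := lt_trans one_pos ht
  rcases le_or_gt 1 p with hp1 | hp1
  · have h := one_add_mul_self_le_rpow_one_add (s := t - 1) (by linarith) hp1
    rw [add_sub_cancel] at h
    have : p * (t - 1) / t ≤ p * (t - 1) := by
      rw [div_le_iff₀ ht0]
      nlinarith [mul_nonneg hp.le (sub_nonneg.2 ht.le)]
    linarith
  · -- 0 < p < 1 : use reverse Bernoulli on 1/t
    have hs : -1 ≤ 1 / t - 1 := by
      have : 0 < 1 / t := by positivity
      linarith
    have h := rpow_one_add_le_one_add_mul_self hs hp.le hp1.le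
    rw [add_sub_cancel] at h
    have hinv : (1 / t) ^ p = (t ^ p)⁻¹ := by
      rw [one_div, Real.inv_rpow ht0.le]
    have htp : 0 < t ^ p := Real.rpow_pos_of_pos ht0 p
    have hnn : 0 ≤ p * (t - 1) / t := by
      apply div_nonneg _ ht0.le
      exact mul_nonneg hp.le (by linarith)
    have key : (t ^ p)⁻¹ ≤ 1 - p * (t - 1) / t := by
      rw [← hinv]
      calc (1 / t) ^ p ≤ 1 + p * (1 / t - 1) := h
        _ = 1 - p * (t - 1) / t := by field_simp; ring
    have h1 : (1 + p * (t - 1) / t) * (t ^ p)⁻¹ ≤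
        (1 + p * (t - 1) / t) * (1 - p * (t - 1) / t) :=
      mul_le_mul_of_nonneg_left key (by linarith)
    have h2 : (1 + p * (t - 1) / t) * (1 - p * (t - 1) / t) ≤ 1 := by
      nlinarith [sq_nonneg (p * (t - 1) / t)]
    have h3 : (1 + p * (t - 1) / t) * (t ^ p)⁻¹ ≤ 1 := h1.trans h2
    calc 1 + p * (t - 1) / t
        = (1 + p * (t - 1) / t) * (t ^ p)⁻¹ * t ^ p := by field_simp
      _ ≤ 1 * t ^ p := mul_le_mul_of_nonneg_right h3 htp.le
      _ = t ^ p := one_mul _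

/-- Key telescoping inequality: for `m ≥ 2`, `(α-2) * m^(1-α) ≤ (m-1)^(2-α) - m^(2-α)`. -/
lemma aux_key (α : ℝ) (hα : 2 < α) (m : ℕ) (hm : 2 ≤ m) :
    (α - 2) * (m : ℝ) ^ (1 - α) ≤ ((m : ℝ) - 1) ^ (2 - α) - (m : ℝ) ^ (2 - α) := by
  set p : ℝ := α - 2 with hpdef
  have hp : 0 < p := by simp [hpdef]; linarith
  have hb : (2 : ℝ) ≤ (m : ℝ) := by exact_mod_cast hm
  have ha1 : (1 : ℝ) ≤ (m : ℝ) - 1 := by linarith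
  have ha0 : (0 : ℝ) < (m : ℝ) - 1 := by linarith
  have hb0 : (0 : ℝ) < (m : ℝ) := by linarith
  set a : ℝ := (m : ℝ) - 1
  set b : ℝ := (m : ℝ)
  have ht : 1 < b / a := (one_lt_div ha0).2 (by simp [a, b])
  have hber := aux_bernoulli ht hp
  -- (b/a)^p = b^p / a^p
  have hdiv : (b / a) ^ p = b ^ p / a ^ p := Real.div_rpow hb0.le ha0.le p
  have hap : 0 < a ^ p := Real.rpow_pos_of_pos ha0 p
  have hbp : 0 < b ^ p := Real.rpow_pos_of_pos hb0 p
  -- (t-1)/t = 1/b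
  have htt : p * (b / a - 1) / (b / a) = p * (1 / b) := by
    have hb1 : b - a = 1 := by simp [a, b]
    field_simp
    nlinarith [hb1]
  rw [htt, hdiv] at hber
  -- hber : 1 + p * (1/b) ≤ b^p / a^p
  have h2 : a ^ p * (1 + p / b) ≤ b ^ p := by
    rw [← le_div_iff₀' hap]
    calc 1 + p / b = 1 + p * (1 / b) := by ring
      _ ≤ b ^ p / a ^ p := hber
  -- rewrite goal using rpow_neg
  have e1 : ((m : ℝ) - 1) ^ (2 - α) = (a ^ p)⁻¹ := by
    rw [show (2 - α) = -p by ring, Real.rpow_neg ha0.le]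
  have e2 : (m : ℝ) ^ (2 - α) = (b ^ p)⁻¹ := by
    rw [show (2 - α) = -p by ring, Real.rpow_neg hb0.le]
  have e3 : (m : ℝ) ^ (1 - α) = (b ^ p)⁻¹ / b := by
    rw [show (1 - α) = -p + -1 by ring, Real.rpow_add hb0, Real.rpow_neg hb0.le,
      Real.rpow_neg_one]
    ring
  rw [e1, e2, e3]
  -- goal : p * ((b^p)⁻¹ / b) ≤ (a^p)⁻¹ - (b^p)⁻¹
  have heq1 : p * ((b ^ p)⁻¹ / b) = p / (b ^ p * b) := by field_simp
  have heq2 : (a ^ p)⁻¹ - (b ^ p)⁻¹ = (b ^ p - a ^ p) / (a ^ p * b ^ p) := by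
    field_simp
  rw [heq1, heq2, div_le_div_iff₀ (by positivity) (by positivity)]
  have h2' : a ^ p * b + a ^ p * p ≤ b ^ p * b := by
    have hmul := mul_le_mul_of_nonneg_right h2 hb0.le
    calc a ^ p * b + a ^ p * p = a ^ p * (1 + p / b) * b := by field_simp
      _ ≤ b ^ p * b := hmul
  have hstep : a ^ p * p ≤ (b ^ p - a ^ p) * b := by nlinarith
  nlinarith [mul_le_mul_of_nonneg_right hstep hbp.le]

/-- Series tail bound: `∑_{m=k}^{M-1} m^(1-α) ≤ k^(1-α) + k^(2-α)/(α-2)`. -/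
lemma aux_series (α : ℝ) (hα : 2 < α) (k : ℕ) (hk : 1 ≤ k) (M : ℕ) :
    ∑ m ∈ Finset.Ico k M, (m : ℝ) ^ (1 - α) ≤
      (k : ℝ) ^ (1 - α) + (k : ℝ) ^ (2 - α) / (α - 2) := by
  have hk0 : (0:ℝ) < (k:ℝ) := by exact_mod_cast hk
  have hα2 : (0:ℝ) < α - 2 := by linarith
  rcases le_or_gt M k with hM | hM
  · rw [Finset.Ico_eq_empty (by omega)]
    simp
    positivity
  · -- M = M' + 1 with M' ≥ k; prove strengthened statement by induction
    have main : ∀ N, k ≤ N → ∑ m ∈ Finset.Ico k (N+1), (m : ℝ) ^ (1 - α)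
        + (N : ℝ) ^ (2 - α) / (α - 2) ≤ (k : ℝ) ^ (1 - α) + (k : ℝ) ^ (2 - α) / (α - 2) := by
      intro N hN
      induction N, hN using Nat.le_induction with
      | base =>
        rw [Finset.Ico_add_one_right_eq_Icc, Finset.Icc_self, Finset.sum_singleton]
      | succ n hn ih =>
        have hsum : ∑ m ∈ Finset.Ico k (n+1+1), (m : ℝ) ^ (1 - α)
            = (∑ m ∈ Finset.Ico k (n+1), (m : ℝ) ^ (1 - α)) + ((n+1 : ℕ) : ℝ) ^ (1 - α) := by
          rw [Finset.sum_Ico_succ_top (by omega)]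
        rw [hsum]
        have hkey := aux_key α hα (n+1) (by omega)
        have hcast : (((n+1 : ℕ) : ℝ) - 1) = (n : ℝ) := by push_cast; ring
        rw [hcast] at hkey
        have h3 : ((n+1:ℕ) : ℝ) ^ (1 - α)
            ≤ ((n : ℝ) ^ (2 - α) - ((n+1:ℕ) : ℝ) ^ (2 - α)) / (α - 2) := by
          rw [le_div_iff₀ hα2]
          linarith
        have h4 : ((n : ℝ) ^ (2 - α) - ((n+1:ℕ) : ℝ) ^ (2 - α)) / (α - 2)
            + ((n+1:ℕ) : ℝ) ^ (2 - α) / (α - 2) = (n : ℝ) ^ (2 - α) / (α - 2) := by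
          rw [← add_div]
          ring_nf
        linarith
    obtain ⟨M', rfl⟩ : ∃ M', M = M' + 1 := ⟨M - 1, by omega⟩
    have hM' : k ≤ M' := by omega
    have h := main M' hM'
    have : (0:ℝ) ≤ (M' : ℝ) ^ (2 - α) / (α - 2) := by positivity
    linarith

/-- Packing bound: points with pairwise distances `≥ d` lying in an annulus
`r₁ ≤ dist · u ≤ r₂` satisfy `card * (d/2)² ≤ (r₂+d/2)² - (r₁-d/2)²`. -/
lemma aux_pack (d : ℝ) (hd : 0 < d) (T : Finset (EuclideanSpace ℝ (Fin 2)))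
    (hT : (T : Set (EuclideanSpace ℝ (Fin 2))).Pairwise fun a b => d ≤ dist a b)
    (u : EuclideanSpace ℝ (Fin 2)) (r₁ r₂ : ℝ) (h1 : d / 2 ≤ r₁) (h12 : r₁ ≤ r₂)
    (hmem : ∀ t ∈ T, r₁ ≤ dist t u ∧ dist t u ≤ r₂) :
    (T.card : ℝ) * (d / 2) ^ 2 ≤ (r₂ + d / 2) ^ 2 - (r₁ - d / 2) ^ 2 := by
  classical
  set c : ℝ := Real.sqrt Real.pi ^ Fintype.card (Fin 2) /
      Real.Gamma (Fintype.card (Fin 2) / 2 + 1) with hc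
  have hcpos : 0 < c := by
    apply div_pos
    · have : (0:ℝ) < Real.sqrt Real.pi := Real.sqrt_pos.2 Real.pi_pos
      positivity
    · exact Real.Gamma_pos_of_pos (by norm_num)
  -- disjointness of the small balls
  have hdisj : (T : Set (EuclideanSpace ℝ (Fin 2))).PairwiseDisjoint
      fun t => ball t (d / 2) := by
    intro a ha b hb hab
    exact ball_disjoint_ball (by linarith [hT ha hb hab])
  -- union of small balls
  have hU : volume (⋃ t ∈ T, ball t (d / 2)) = ∑ t ∈ T, volume (ball t (d / 2)) :=
    measure_biUnion_finset hdisj fun t _ => measurableSet_ball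
  -- the small balls avoid the inner ball around u
  have hdisj2 : Disjoint (⋃ t ∈ T, ball t (d / 2)) (ball u (r₁ - d / 2)) := by
    apply Set.disjoint_iUnion_left.2
    intro t
    apply Set.disjoint_iUnion_left.2
    intro ht
    apply ball_disjoint_ball
    linarith [(hmem t ht).1]
  -- everything is inside the big closed ball
  have hsub : (⋃ t ∈ T, ball t (d / 2)) ∪ ball u (r₁ - d / 2) ⊆
      closedBall u (r₂ + d / 2) := by
    apply Set.union_subset
    · apply Set.iUnion₂_subset
      intro t ht y hy
      rw [mem_ball] at hy
      rw [mem_closedBall]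
      calc dist y u ≤ dist y t + dist t u := dist_triangle y t u
        _ ≤ d / 2 + r₂ := by
            have := (hmem t ht).2
            linarith [hy.le]
        _ = r₂ + d / 2 := by ring
    · intro y hy
      rw [mem_ball] at hy
      rw [mem_closedBall]
      have : dist y u < r₁ - d / 2 := hy
      linarith
  -- measure computation
  have hmeas : ∑ t ∈ T, volume (ball t (d / 2)) + volume (ball u (r₁ - d / 2)) ≤
      volume (closedBall u (r₂ + d / 2)) := by
    rw [← hU, ← measure_union hdisj2 measurableSet_ball]
    exact measure_mono hsub
  -- plug in the volume formulas
  have hvb : ∀ (x : EuclideanSpace ℝ (Fin 2)) (r : ℝ),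
      volume (ball x r) = ENNReal.ofReal r ^ 2 * ENNReal.ofReal c := by
    intro x r
    rw [EuclideanSpace.volume_ball, hc]
    norm_num
  have hvcb : volume (closedBall u (r₂ + d / 2)) =
      ENNReal.ofReal (r₂ + d / 2) ^ 2 * ENNReal.ofReal c := by
    rw [EuclideanSpace.volume_closedBall, hc]
    norm_num
  rw [hvcb] at hmeas
  simp only [hvb] at hmeas
  rw [Finset.sum_const, nsmul_eq_mul] at hmeas
  -- convert to real inequality
  have hd2 : (0:ℝ) ≤ d / 2 := by linarith
  have hr1 : (0:ℝ) ≤ r₁ - d / 2 := by linarith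
  have hr2 : (0:ℝ) ≤ r₂ + d / 2 := by linarith
  have key : (T.card : ℝ) * ((d/2)^2 * c) + (r₁ - d/2)^2 * c ≤ (r₂ + d/2)^2 * c := by
    have conv : ENNReal.ofReal ((T.card : ℝ) * ((d/2)^2 * c) + (r₁ - d/2)^2 * c)
        ≤ ENNReal.ofReal ((r₂ + d/2)^2 * c) := by
      rw [ENNReal.ofReal_add (by positivity) (by positivity),
        ENNReal.ofReal_mul (by positivity), ENNReal.ofReal_mul (by positivity),
        ENNReal.ofReal_mul (by positivity), ENNReal.ofReal_mul (by positivity),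
        ENNReal.ofReal_pow hd2,
        ENNReal.ofReal_pow hr1, ENNReal.ofReal_pow hr2, ENNReal.ofReal_natCast]
      exact hmeas
    exact (ENNReal.ofReal_le_ofReal_iff (by positivity)).1 conv
  have := (mul_le_mul_iff_of_pos_right hcpos).1 (by nlinarith : ((T.card : ℝ) * (d/2)^2 + (r₁-d/2)^2) * c ≤ (r₂+d/2)^2 * c)
  linarith

/-- Interference tail bound: for path-loss exponent `α > 2` and a finite set `S` of points
in the Euclidean plane with pairwise distances at least `d > 0`, the sum of `dist(s,u)^(-α)`
over the points of `S` at distance at least `k·d` from `u` is at most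
`24·(1 + 1/(α-2))·k^(2-α)·d^(-α)`. -/
theorem stmt_8 (α d : ℝ) (hα : 2 < α) (hd : 0 < d)
    (S : Finset (EuclideanSpace ℝ (Fin 2)))
    (hS : (S : Set (EuclideanSpace ℝ (Fin 2))).Pairwise fun a b => d ≤ dist a b)
    (u : EuclideanSpace ℝ (Fin 2)) (k : ℕ) (hk : 1 ≤ k) :
    ∑ s ∈ S.filter fun s => (k : ℝ) * d ≤ dist s u, dist s u ^ (-α) ≤
      24 * (1 + 1 / (α - 2)) * (k : ℝ) ^ (2 - α) * d ^ (-α) := by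
  classical
  set S' := S.filter fun s => (k : ℝ) * d ≤ dist s u with hS'
  set g : EuclideanSpace ℝ (Fin 2) → ℕ := fun s => ⌊dist s u / d⌋₊ with hg
  set M := S'.sup g + 1 with hM
  have hk0 : (0:ℝ) < (k:ℝ) := by exact_mod_cast hk
  have hα2 : (0:ℝ) < α - 2 := by linarith
  have hmaps : ∀ s ∈ S', g s ∈ Finset.Ico k M := by
    intro s hs
    rw [Finset.mem_Ico]
    constructor
    · apply Nat.le_floor
      rw [le_div_iff₀ hd]
      exact (Finset.mem_filter.1 hs).2
    · exact Nat.lt_succ_of_le (Finset.le_sup hs)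
  rw [← Finset.sum_fiberwise_of_maps_to hmaps]
  -- bound each fiber
  have fiber_bound : ∀ m ∈ Finset.Ico k M,
      ∑ s ∈ S'.filter fun s => g s = m, dist s u ^ (-α) ≤
        24 * (m : ℝ) ^ (1 - α) * d ^ (-α) := by
    intro m hm
    rw [Finset.mem_Ico] at hm
    have hm1 : 1 ≤ m := le_trans hk hm.1
    have hm1R : (1:ℝ) ≤ (m:ℝ) := by exact_mod_cast hm1
    set T := S'.filter fun s => g s = m with hT
    have hTmem : ∀ s ∈ T, (m:ℝ) * d ≤ dist s u ∧ dist s u ≤ ((m:ℝ) + 1) * d := by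
      intro s hs
      rw [hT, Finset.mem_filter] at hs
      have hfloor : ⌊dist s u / d⌋₊ = m := hs.2
      have hd0 : (0:ℝ) ≤ dist s u / d := by positivity
      have h1 : (m:ℝ) ≤ dist s u / d := by
        rw [← hfloor]; exact Nat.floor_le hd0
      have h2 : dist s u / d < (m:ℝ) + 1 := by
        rw [← hfloor]; push_cast; exact Nat.lt_floor_add_one _
      constructor
      · rw [← le_div_iff₀ hd]; exact h1
      · rw [← div_le_iff₀ hd]; exact (le_of_lt h2)
    -- packing bound on card T
    have hTpair : (T : Set (EuclideanSpace ℝ (Fin 2))).Pairwise fun a b => d ≤ dist a b := by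
      apply hS.mono
      intro x hx
      have : x ∈ T := hx
      rw [hT, Finset.mem_filter] at this
      have := this.1
      rw [hS', Finset.mem_filter] at this
      exact this.1
    have hcard : (T.card : ℝ) * (d/2)^2 ≤ (((m:ℝ)+1)*d + d/2)^2 - ((m:ℝ)*d - d/2)^2 := by
      apply aux_pack d hd T hTpair u ((m:ℝ)*d) (((m:ℝ)+1)*d)
      · nlinarith
      · nlinarith
      · exact hTmem
    have hcard' : (T.card : ℝ) ≤ 16 * (m:ℝ) + 8 := by
      have hdsq : (0:ℝ) < (d/2)^2 := by positivity
      have expand : (((m:ℝ)+1)*d + d/2)^2 - ((m:ℝ)*d - d/2)^2 = (16*(m:ℝ)+8) * (d/2)^2 := by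
        ring
      rw [expand] at hcard
      exact le_of_mul_le_mul_right hcard hdsq
    -- each term ≤ (m d)^(-α)
    have hmd : (0:ℝ) < (m:ℝ) * d := by positivity
    have term_bound : ∀ s ∈ T, dist s u ^ (-α) ≤ ((m:ℝ) * d) ^ (-α) := by
      intro s hs
      exact Real.rpow_le_rpow_of_nonpos hmd (hTmem s hs).1 (by linarith)
    calc ∑ s ∈ T, dist s u ^ (-α) ≤ ∑ _s ∈ T, ((m:ℝ) * d) ^ (-α) :=
          Finset.sum_le_sum term_bound
      _ = (T.card : ℝ) * ((m:ℝ) * d) ^ (-α) := by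
          rw [Finset.sum_const, nsmul_eq_mul]
      _ ≤ (16 * (m:ℝ) + 8) * ((m:ℝ) * d) ^ (-α) := by
          apply mul_le_mul_of_nonneg_right hcard'
          positivity
      _ ≤ 24 * (m:ℝ) ^ (1 - α) * d ^ (-α) := by
          rw [Real.mul_rpow (by positivity) hd.le]
          have h1 : (16 * (m:ℝ) + 8) ≤ 24 * (m:ℝ) := by linarith
          have h2 : (m:ℝ) * (m:ℝ)^(-α) = (m:ℝ)^(1-α) := by
            rw [show (1 - α) = 1 + -α by ring, Real.rpow_add (by linarith), Real.rpow_one]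
          have hma : (0:ℝ) ≤ (m:ℝ)^(-α) := by positivity
          have hda : (0:ℝ) ≤ d^(-α) := by positivity
          calc (16 * (m:ℝ) + 8) * ((m:ℝ)^(-α) * d^(-α))
              ≤ 24 * (m:ℝ) * ((m:ℝ)^(-α) * d^(-α)) := by
                apply mul_le_mul_of_nonneg_right h1 (by positivity)
            _ = 24 * ((m:ℝ) * (m:ℝ)^(-α)) * d^(-α) := by ring
            _ = 24 * (m:ℝ)^(1-α) * d^(-α) := by rw [h2]
  calc ∑ m ∈ Finset.Ico k M, ∑ s ∈ S'.filter fun s => g s = m, dist s u ^ (-α)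
      ≤ ∑ m ∈ Finset.Ico k M, 24 * (m : ℝ) ^ (1 - α) * d ^ (-α) :=
        Finset.sum_le_sum fiber_bound
    _ = 24 * d ^ (-α) * ∑ m ∈ Finset.Ico k M, (m : ℝ) ^ (1 - α) := by
        rw [Finset.mul_sum]
        apply Finset.sum_congr rfl
        intro m _
        ring
    _ ≤ 24 * d ^ (-α) * ((k : ℝ) ^ (1 - α) + (k : ℝ) ^ (2 - α) / (α - 2)) := by
        apply mul_le_mul_of_nonneg_left (aux_series α hα k hk M) (by positivity)
    _ ≤ 24 * (1 + 1 / (α - 2)) * (k : ℝ) ^ (2 - α) * d ^ (-α) := by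
        have h1 : (k : ℝ) ^ (1 - α) ≤ (k : ℝ) ^ (2 - α) := by
          apply Real.rpow_le_rpow_of_exponent_le (by exact_mod_cast hk)
          linarith
        have hda : (0:ℝ) ≤ d^(-α) := by positivity
        have : (k : ℝ) ^ (1 - α) + (k : ℝ) ^ (2 - α) / (α - 2)
            ≤ (1 + 1 / (α - 2)) * (k : ℝ) ^ (2 - α) := by
          rw [one_add_div (by linarith : α - 2 ≠ 0), div_mul_eq_mul_div, le_div_iff₀ hα2]
          have e : (k:ℝ) ^ (2 - α) / (α - 2) * (α - 2) = (k:ℝ) ^ (2 - α) := by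
            field_simp
          nlinarith [mul_le_mul_of_nonneg_right h1 hα2.le]
        nlinarith
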